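/- arXiv:1608.02767 — 3 statements merged into one kernel-verified Lean document; each statement's English description precedes it below -/
import Mathlib

section
/- Let H be a separable Hilbert space and Ψ = {ψ_j}_{j∈I} a countable family in H. The analysis operator T*_Ψ (the adjoint of the synthesis operator T_Ψ defined on finitely supported sequences by c ↦ Σ_j c_j ψ_j) maps span(Ψ) into ℓ²(I) if and only if for every j ∈ I the quantity t_j = Σ_{k∈I} |⟨ψ_j, ψ_k⟩|² is finite. -/
/-- The analysis operator `T*_Ψ` (adjoint of the synthesis operator
`T_Ψ : ℓ₀(I) → H`, `c ↦ ∑ j, c j • ψ j`) maps `span Ψ` into `ℓ²(I)` — i.e. every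
`φ ∈ span Ψ` lies in `Dom T*_Ψ` (the functional `c ↦ ⟨T_Ψ c, φ⟩` is bounded on
finitely supported sequences with the `ℓ²` norm, so that `T*_Ψ φ = {⟨φ, ψ_j⟩}_j ∈ ℓ²`)
— if and only if `t_j = ∑_k |⟨ψ_j, ψ_k⟩|² < ∞` for every `j`.
(Here the paper's inner product `⟨x, y⟩`, linear in `x`, is Mathlib's `⟪y, x⟫`.) -/
theorem stmt_0 {H : Type*} [NormedAddCommGroup H] [InnerProductSpace ℂ H]
    [CompleteSpace H] [SecondCountableTopology H]
    {I : Type*} [Countable I] (ψ : I → H) :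
    ((∀ φ ∈ Submodule.span ℂ (Set.range ψ),
        (∃ C : ℝ, ∀ c : I →₀ ℂ,
          ‖(inner ℂ φ (c.sum fun j a => a • ψ j) : ℂ)‖ ≤
            C * Real.sqrt (∑ j ∈ c.support, ‖c j‖ ^ 2)) ∧
        Memℓp (fun j => (inner ℂ (ψ j) φ : ℂ)) 2)
      ↔ ∀ j : I, Summable fun k => ‖(inner ℂ (ψ k) (ψ j) : ℂ)‖ ^ 2) := by
  have key : ∀ f : I → ℂ, Memℓp f 2 ↔ Summable fun i => ‖f i‖ ^ 2 := by
    intro f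
    rw [memℓp_gen_iff (by norm_num)]
    constructor <;> intro h <;>
    · refine h.congr fun i => ?_
      rw [show ((2 : ENNReal).toReal) = ((2 : ℕ) : ℝ) by norm_num,
        Real.rpow_natCast ‖f i‖ 2]
  constructor
  · intro h j
    exact (key _).1 (h (ψ j) (Submodule.subset_span ⟨j, rfl⟩)).2
  · intro ht φ hφ
    have hmem : Memℓp (fun j => (inner ℂ (ψ j) φ : ℂ)) 2 := by
      induction hφ using Submodule.span_induction with
      | mem x hx =>
          obtain ⟨j, rfl⟩ := hx
          exact (key _).2 (ht j)
      | zero => simpa [Pi.zero_def] using zero_memℓp (p := (2 : ENNReal)) (E := fun _ : I => ℂ)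
      | add x y hx hy ihx ihy => simpa [inner_add_right, Pi.add_def] using ihx.add ihy
      | smul a x hx ih => simpa [inner_smul_right, Pi.smul_def, smul_eq_mul] using ih.const_smul a
    refine ⟨?_, hmem⟩
    have hsum : Summable fun j => ‖(inner ℂ (ψ j) φ : ℂ)‖ ^ 2 := (key _).1 hmem
    refine ⟨Real.sqrt (∑' j, ‖(inner ℂ (ψ j) φ : ℂ)‖ ^ 2), fun c => ?_⟩
    have expand : (inner ℂ φ (c.sum fun j a => a • ψ j) : ℂ)
        = ∑ j ∈ c.support, c j * inner ℂ φ (ψ j) := by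
      rw [Finsupp.sum, inner_sum]
      exact Finset.sum_congr rfl fun j _ => inner_smul_right _ _ _
    rw [expand]
    calc ‖∑ j ∈ c.support, c j * inner ℂ φ (ψ j)‖
        ≤ ∑ j ∈ c.support, ‖c j‖ * ‖(inner ℂ φ (ψ j) : ℂ)‖ :=
          (norm_sum_le _ _).trans_eq
            (Finset.sum_congr rfl fun j _ => norm_mul _ _)
      _ ≤ Real.sqrt (∑ j ∈ c.support, ‖c j‖ ^ 2) *
            Real.sqrt (∑ j ∈ c.support, ‖(inner ℂ φ (ψ j) : ℂ)‖ ^ 2) := by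
          rw [← Real.sqrt_mul (by positivity)]
          refine (Real.le_sqrt (by positivity) (by positivity)).2 ?_
          exact Finset.sum_mul_sq_le_sq_mul_sq _ _ _
      _ ≤ Real.sqrt (∑ j ∈ c.support, ‖c j‖ ^ 2) *
            Real.sqrt (∑' j, ‖(inner ℂ (ψ j) φ : ℂ)‖ ^ 2) := by
          refine mul_le_mul_of_nonneg_left (Real.sqrt_le_sqrt ?_) (Real.sqrt_nonneg _)
          have he : ∀ j, ‖(inner ℂ φ (ψ j) : ℂ)‖ = ‖(inner ℂ (ψ j) φ : ℂ)‖ := fun j => by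
            rw [← inner_conj_symm, RCLike.norm_conj]
          simp_rw [he]
          exact Summable.sum_le_tsum _ (fun j _ => by positivity) hsum
      _ = Real.sqrt (∑' j, ‖(inner ℂ (ψ j) φ : ℂ)‖ ^ 2) *
            Real.sqrt (∑ j ∈ c.support, ‖c j‖ ^ 2) := mul_comm _ _
end

section
/- Let H₁, H₂ be separable Hilbert spaces, K : H₁ → H₂ a bounded linear operator, K* its adjoint, G = K*K and F = KK*, and fix 0 < A ≤ B < ∞. Then A·P_{cl(Ran K)} ≤ F ≤ B·P_{cl(Ran K)} on H₂ if and only if A·G ≤ G² ≤ B·G on H₁. -/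
open ContinuousLinearMap

/-- for a bounded operator `K : H₁ → H₂` with `G = K*K`, `F = KK*`
and `0 < A ≤ B < ∞`: `A·P_{cl(Ran K)} ≤ F ≤ B·P_{cl(Ran K)}` on `H₂` iff
`A·G ≤ G² ≤ B·G` on `H₁` (operator inequalities expressed via quadratic forms,
using `⟨P y, y⟩ = ‖P y‖²` for the orthogonal projection `P`). -/
theorem stmt_5 {H₁ H₂ : Type*} [NormedAddCommGroup H₁] [InnerProductSpace ℂ H₁]
    [CompleteSpace H₁] [SecondCountableTopology H₁]
    [NormedAddCommGroup H₂] [InnerProductSpace ℂ H₂]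
    [CompleteSpace H₂] [SecondCountableTopology H₂]
    (K : H₁ →L[ℂ] H₂) (A B : ℝ) (hA : 0 < A) (hAB : A ≤ B) :
    (∀ y : H₂,
        A * ‖(Submodule.orthogonalProjectionOnto (LinearMap.range (K : H₁ →ₗ[ℂ] H₂)).topologicalClosure y : H₂)‖ ^ 2 ≤
          (inner ℂ ((K ∘L adjoint K) y) y : ℂ).re ∧
        (inner ℂ ((K ∘L adjoint K) y) y : ℂ).re ≤
          B * ‖(Submodule.orthogonalProjectionOnto (LinearMap.range (K : H₁ →ₗ[ℂ] H₂)).topologicalClosure y : H₂)‖ ^ 2)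
    ↔ (∀ x : H₁,
        A * (inner ℂ ((adjoint K ∘L K) x) x : ℂ).re ≤
          (inner ℂ ((adjoint K ∘L K) ((adjoint K ∘L K) x)) x : ℂ).re ∧
        (inner ℂ ((adjoint K ∘L K) ((adjoint K ∘L K) x)) x : ℂ).re ≤
          B * (inner ℂ ((adjoint K ∘L K) x) x : ℂ).re) := by
  set V := (LinearMap.range (K : H₁ →ₗ[ℂ] H₂)).topologicalClosure with hV
  -- quadratic form of F
  have hF : ∀ y : H₂, (inner ℂ ((K ∘L adjoint K) y) y : ℂ).re = ‖adjoint K y‖ ^ 2 := by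
    intro y
    have : (inner ℂ ((K ∘L adjoint K) y) y : ℂ) = inner ℂ (adjoint K y) (adjoint K y) := by
      rw [comp_apply, ← adjoint_inner_right]
    rw [this, inner_self_eq_norm_sq_to_K]
    simp [← Complex.ofReal_pow]
  -- quadratic form of G
  have hG : ∀ x : H₁, (inner ℂ ((adjoint K ∘L K) x) x : ℂ).re = ‖K x‖ ^ 2 := by
    intro x
    have : (inner ℂ ((adjoint K ∘L K) x) x : ℂ) = inner ℂ (K x) (K x) := by
      rw [comp_apply, adjoint_inner_left]
    rw [this, inner_self_eq_norm_sq_to_K]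
    simp [← Complex.ofReal_pow]
  -- quadratic form of G²
  have hG2 : ∀ x : H₁,
      (inner ℂ ((adjoint K ∘L K) ((adjoint K ∘L K) x)) x : ℂ).re
        = ‖adjoint K (K x)‖ ^ 2 := by
    intro x
    have : (inner ℂ ((adjoint K ∘L K) ((adjoint K ∘L K) x)) x : ℂ)
        = inner ℂ (adjoint K (K x)) (adjoint K (K x)) := by
      rw [comp_apply, comp_apply, adjoint_inner_left, ← adjoint_inner_right]
    rw [this, inner_self_eq_norm_sq_to_K]
    simp [← Complex.ofReal_pow]
  constructor
  · intro h x
    have hmem : K x ∈ V := Submodule.le_topologicalClosure _ (LinearMap.mem_range_self (K : H₁ →ₗ[ℂ] H₂) x)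
    have hproj : (V.orthogonalProjectionOnto (K x) : H₂) = K x :=
      Submodule.starProjection_eq_self_iff.mpr hmem
    have h2 := h (K x)
    rw [hproj, hF] at h2
    have hKadj : adjoint K (K x) = (adjoint K ∘L K) x := rfl
    rw [hG, hG2]
    rw [hKadj] at h2
    exact h2
  · intro h y
    -- the inequality holds on the closure of the range of K
    have hS : ∀ z ∈ V, A * ‖z‖ ^ 2 ≤ ‖adjoint K z‖ ^ 2 ∧ ‖adjoint K z‖ ^ 2 ≤ B * ‖z‖ ^ 2 := by
      have hclosed : IsClosed {z : H₂ | A * ‖z‖ ^ 2 ≤ ‖adjoint K z‖ ^ 2 ∧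
          ‖adjoint K z‖ ^ 2 ≤ B * ‖z‖ ^ 2} := by
        have hc1 : Continuous fun z : H₂ => A * ‖z‖ ^ 2 :=
          continuous_const.mul (continuous_norm.pow 2)
        have hc2 : Continuous fun z : H₂ => ‖adjoint K z‖ ^ 2 :=
          ((adjoint K).continuous.norm).pow 2
        have hc3 : Continuous fun z : H₂ => B * ‖z‖ ^ 2 :=
          continuous_const.mul (continuous_norm.pow 2)
        exact (isClosed_le hc1 hc2).inter (isClosed_le hc2 hc3)
      have hsub : (LinearMap.range (K : H₁ →ₗ[ℂ] H₂) : Set H₂) ⊆ {z : H₂ | A * ‖z‖ ^ 2 ≤ ‖adjoint K z‖ ^ 2 ∧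
          ‖adjoint K z‖ ^ 2 ≤ B * ‖z‖ ^ 2} := by
        rintro _ ⟨x, rfl⟩
        have hx := h x
        rw [hG, hG2] at hx
        exact hx
      intro z hz
      have : z ∈ closure (LinearMap.range (K : H₁ →ₗ[ℂ] H₂) : Set H₂) := by
        rw [← Submodule.topologicalClosure_coe]
        exact hz
      exact hclosed.closure_subset_iff.mpr hsub this
    -- K* y = K* (P y)
    set z : H₂ := (V.orthogonalProjectionOnto y : H₂) with hz
    have hw : y - z ∈ Vᗮ := Submodule.sub_starProjection_mem_orthogonal y
    have hker : adjoint K (y - z) = 0 := by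
      have h0 : (inner ℂ (K (adjoint K (y - z))) (y - z) : ℂ) = 0 :=
        hw _ (Submodule.le_topologicalClosure _ (LinearMap.mem_range_self (K : H₁ →ₗ[ℂ] H₂) _))
      have : (inner ℂ (adjoint K (y - z)) (adjoint K (y - z)) : ℂ) = 0 := by
        rw [adjoint_inner_left, ← inner_conj_symm, h0, map_zero]
      exact inner_self_eq_zero.mp this
    have heq : adjoint K y = adjoint K z := by
      have h1 := map_sub (adjoint K) y z
      rw [hker] at h1
      exact sub_eq_zero.mp h1.symm
    have hzV : z ∈ V := (V.orthogonalProjectionOnto y).2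
    have := hS z hzV
    rw [hF, heq]
    exact this
end

section
/- Let Γ be a countable discrete group, Π a unitary representation on a separable Hilbert space H forming a dual integrable triple with Bracket [·,·] valued in L¹(R(Γ)). If ψ ∈ H is such that [ψ,ψ] ∈ L²(R(Γ)), then Σ_{γ∈Γ} |⟨ψ, Π(γ)ψ⟩|² < ∞, and consequently the Gramian of the orbit {Π(γ)ψ}_{γ∈Γ} is a closable densely defined operator on ℓ²(Γ). -/
open Filter Topology

/-- The Gramian of the orbit `{Π(γ)ψ}` applied to a finitely supported sequence. -/
noncomputable def orbitGramianApply {H : Type*} [NormedAddCommGroup H] [InnerProductSpace ℂ H]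
    {Γ : Type*} [Group Γ] (U : Γ →* (H ≃ₗᵢ[ℂ] H)) (ψ : H) (c : Γ →₀ ℂ) : Γ → ℂ :=
  fun γ' => ∑ γ ∈ c.support, c γ * (inner ℂ (U γ' ψ) (U γ ψ) : ℂ)

private lemma rpow_two_eq (x : ℝ) : x ^ (2 : ℝ) = x ^ 2 := by
  rw [show (2 : ℝ) = ((2 : ℕ) : ℝ) by norm_num, Real.rpow_natCast]

/-- for a dual integrable triple `(Γ, Π, H)` with operator Bracket
`[·,·]` valued in `L¹(R(Γ))`, if `[ψ,ψ] ∈ L²(R(Γ))` — equivalently (Plancherel),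
its Fourier coefficients `τ([ψ,ψ]ρ(γ)) = ⟨ψ, Π(γ)ψ⟩` form an `ℓ²(Γ)` sequence —
then `∑_γ |⟨ψ, Π(γ)ψ⟩|² < ∞` and the Gramian of the orbit `{Π(γ)ψ}` is a closable
densely defined operator on `ℓ²(Γ)`. (The paper's `⟨x, y⟩` is Mathlib's `⟪y, x⟫`.) -/
theorem stmt_14 {H : Type*} [NormedAddCommGroup H] [InnerProductSpace ℂ H]
    [CompleteSpace H] [SecondCountableTopology H]
    {Γ : Type*} [Group Γ] [Countable Γ]
    (U : Γ →* (H ≃ₗᵢ[ℂ] H)) (ψ : H)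
    (hL2 : Memℓp (fun γ : Γ => (inner ℂ (U γ ψ) ψ : ℂ)) 2) :
    (Summable fun γ : Γ => ‖(inner ℂ (U γ ψ) ψ : ℂ)‖ ^ 2) ∧
    (∀ c : Γ →₀ ℂ, Memℓp (orbitGramianApply U ψ c) 2) ∧
    Dense {x : lp (fun _ : Γ => ℂ) 2 |
      ∃ c : Γ →₀ ℂ, ∀ γ, (x : ∀ _ : Γ, ℂ) γ = c γ} ∧
    (∀ (f : ℕ → Γ →₀ ℂ) (g : Γ → ℂ), Memℓp g 2 →
      Tendsto (fun n => ∑' γ : Γ, ‖(f n) γ‖ ^ 2) atTop (𝓝 0) →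
      Tendsto (fun n => ∑' γ : Γ, ‖orbitGramianApply U ψ (f n) γ - g γ‖ ^ 2) atTop (𝓝 0) →
      g = 0) := by
  classical
  set gfun : Γ → ℂ := fun γ => (inner ℂ (U γ ψ) ψ : ℂ) with hgfun
  have htr : (2 : ENNReal).toReal = 2 := by norm_num
  have hsum2 : Summable fun γ : Γ => ‖gfun γ‖ ^ (2 : ℝ) := by
    have := hL2.summable (p := 2) (by norm_num)
    simpa [htr] using this
  have hsumN : Summable fun γ : Γ => ‖gfun γ‖ ^ 2 := by
    simpa [rpow_two_eq] using hsum2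
  -- key identity
  have hinner : ∀ γ γ' : Γ, (inner ℂ (U γ' ψ) (U γ ψ) : ℂ) = gfun (γ⁻¹ * γ') := by
    intro γ γ'
    have h1 : (U (γ⁻¹ * γ')) ψ = (U γ⁻¹) ((U γ') ψ) := by
      rw [map_mul]; rfl
    have h2 : (U γ⁻¹) ((U γ) ψ) = ψ := by
      have : (U γ⁻¹) ((U γ) ψ) = (U (γ⁻¹ * γ)) ψ := by rw [map_mul]; rfl
      simp [this]
    calc (inner ℂ (U γ' ψ) (U γ ψ) : ℂ)
        = inner ℂ ((U γ⁻¹) ((U γ') ψ)) ((U γ⁻¹) ((U γ) ψ)) :=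
          (LinearIsometryEquiv.inner_map_map (U γ⁻¹) _ _).symm
      _ = gfun (γ⁻¹ * γ') := by rw [h2, hgfun]; simp [h1]
  -- Part 2
  have key : ∀ c : Γ →₀ ℂ, Memℓp (orbitGramianApply U ψ c) 2 := by
    intro c
    have hrw : orbitGramianApply U ψ c =
        fun γ' => ∑ γ ∈ c.support, (fun γ'' => c γ * gfun (γ⁻¹ * γ'')) γ' := by
      funext γ'; simp [orbitGramianApply, hinner]
    rw [hrw]
    apply Memℓp.finset_sum
    intro γ _
    have h1 : Memℓp (fun γ' : Γ => gfun (γ⁻¹ * γ')) 2 := by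
      apply memℓp_gen
      rw [htr]
      have : Summable ((fun x => ‖gfun x‖ ^ (2 : ℝ)) ∘ (Equiv.mulLeft γ⁻¹)) :=
        hsum2.comp_injective (Equiv.mulLeft γ⁻¹).injective
      simpa [Function.comp_def, rpow_two_eq] using this
    have := h1.const_smul (c γ)
    simpa [Pi.smul_def, Pi.smul_apply, smul_eq_mul] using this
  -- Part 3
  have hdense : Dense {x : lp (fun _ : Γ => ℂ) 2 |
      ∃ c : Γ →₀ ℂ, ∀ γ, (x : ∀ _ : Γ, ℂ) γ = c γ} := by
    intro x
    have hx : HasSum (fun γ : Γ => lp.single 2 γ ((x : ∀ _ : Γ, ℂ) γ)) x :=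
      lp.hasSum_single (by norm_num) x
    refine mem_closure_of_tendsto hx ?_
    filter_upwards with s
    refine ⟨∑ γ ∈ s, Finsupp.single γ ((x : ∀ _ : Γ, ℂ) γ), fun γ' => ?_⟩
    simp [lp.coeFn_sum, lp.single_apply, Finsupp.single_apply, Finset.sum_apply,
      Finsupp.finset_sum_apply, Finset.sum_dite_eq, Finset.sum_ite_eq]
    erw [Finset.sum_apply]; simp [lp.single_apply, Pi.single_apply]
  refine ⟨hsumN, key, hdense, ?_⟩
  -- Part 4
  intro f g hg hf0 hconv
  funext γ₀
  show g γ₀ = 0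
  set h : Γ → ℂ := fun γ => (inner ℂ (U γ ψ) (U γ₀ ψ) : ℂ) with hh
  have hhmem : Memℓp h 2 := by
    have hk := key (Finsupp.single γ₀ 1)
    have e : orbitGramianApply U ψ (Finsupp.single γ₀ 1) = h := by
      funext γ
      simp [orbitGramianApply, Finsupp.support_single_ne_zero γ₀ one_ne_zero, hh]
    rwa [e] at hk
  have hhsum : Summable fun γ : Γ => ‖h γ‖ ^ 2 := by
    have := hhmem.summable (p := 2) (by norm_num)
    simpa [htr, rpow_two_eq] using this
  set C : ℝ := Real.sqrt (∑' γ : Γ, ‖h γ‖ ^ 2) with hC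
  -- pointwise bound via Cauchy-Schwarz
  have habs : ∀ n, ‖orbitGramianApply U ψ (f n) γ₀‖ ≤
      Real.sqrt (∑' γ : Γ, ‖(f n) γ‖ ^ 2) * C := by
    intro n
    have hstep1 : ‖orbitGramianApply U ψ (f n) γ₀‖ ≤
        ∑ γ ∈ (f n).support, ‖(f n) γ‖ * ‖h γ‖ := by
      refine (norm_sum_le _ _).trans ?_
      apply Finset.sum_le_sum
      intro γ _
      have : (inner ℂ (U γ₀ ψ) (U γ ψ) : ℂ) = starRingEnd ℂ (h γ) := by
        rw [hh]; exact (inner_conj_symm _ _).symm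
      rw [norm_mul, this, RCLike.norm_conj]
    have hCS : (∑ γ ∈ (f n).support, ‖(f n) γ‖ * ‖h γ‖) ^ 2 ≤
        (∑ γ ∈ (f n).support, ‖(f n) γ‖ ^ 2) * ∑ γ ∈ (f n).support, ‖h γ‖ ^ 2 :=
      Finset.sum_mul_sq_le_sq_mul_sq _ _ _
    have hfs : Summable fun γ : Γ => ‖(f n) γ‖ ^ 2 := by
      apply summable_of_ne_finset_zero (s := (f n).support)
      intro γ hγ
      simp [Finsupp.notMem_support_iff.mp hγ]
    have hb1 : (∑ γ ∈ (f n).support, ‖(f n) γ‖ ^ 2) ≤ ∑' γ : Γ, ‖(f n) γ‖ ^ 2 :=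
      Summable.sum_le_tsum _ (fun γ _ => by positivity) hfs
    have hb2 : (∑ γ ∈ (f n).support, ‖h γ‖ ^ 2) ≤ ∑' γ : Γ, ‖h γ‖ ^ 2 :=
      Summable.sum_le_tsum _ (fun γ _ => by positivity) hhsum
    have hnn : (0 : ℝ) ≤ ∑ γ ∈ (f n).support, ‖(f n) γ‖ * ‖h γ‖ :=
      Finset.sum_nonneg fun γ _ => by positivity
    refine hstep1.trans ?_
    have := hCS.trans (mul_le_mul hb1 hb2 (Finset.sum_nonneg fun γ _ => by positivity)
      ((Finset.sum_nonneg fun γ _ => by positivity).trans hb1))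
    calc (∑ γ ∈ (f n).support, ‖(f n) γ‖ * ‖h γ‖)
        = Real.sqrt ((∑ γ ∈ (f n).support, ‖(f n) γ‖ * ‖h γ‖) ^ 2) :=
          (Real.sqrt_sq hnn).symm
      _ ≤ Real.sqrt ((∑' γ : Γ, ‖(f n) γ‖ ^ 2) * ∑' γ : Γ, ‖h γ‖ ^ 2) :=
          Real.sqrt_le_sqrt this
      _ = Real.sqrt (∑' γ : Γ, ‖(f n) γ‖ ^ 2) * C := by
          rw [Real.sqrt_mul (tsum_nonneg fun γ => by positivity), hC]
  have h1 : Tendsto (fun n => orbitGramianApply U ψ (f n) γ₀) atTop (𝓝 0) := by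
    rw [tendsto_zero_iff_norm_tendsto_zero]
    apply squeeze_zero (fun n => norm_nonneg _) habs
    have : Tendsto (fun n => Real.sqrt (∑' γ : Γ, ‖(f n) γ‖ ^ 2) * C) atTop
        (𝓝 (Real.sqrt 0 * C)) :=
      ((Real.continuous_sqrt.tendsto 0).comp hf0).mul tendsto_const_nhds
    simpa using this
  have h2 : Tendsto (fun n => orbitGramianApply U ψ (f n) γ₀) atTop (𝓝 (g γ₀)) := by
    rw [tendsto_iff_norm_sub_tendsto_zero]
    have hb : ∀ n, ‖orbitGramianApply U ψ (f n) γ₀ - g γ₀‖ ≤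
        Real.sqrt (∑' γ : Γ, ‖orbitGramianApply U ψ (f n) γ - g γ‖ ^ 2) := by
      intro n
      have hs : Summable fun γ : Γ => ‖orbitGramianApply U ψ (f n) γ - g γ‖ ^ 2 := by
        have := ((key (f n)).sub hg).summable (p := 2) (by norm_num)
        simpa [htr, rpow_two_eq, Pi.sub_apply] using this
      have hle : ‖orbitGramianApply U ψ (f n) γ₀ - g γ₀‖ ^ 2 ≤
          ∑' γ : Γ, ‖orbitGramianApply U ψ (f n) γ - g γ‖ ^ 2 :=
        Summable.le_tsum hs γ₀ fun γ _ => by positivity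
      calc ‖orbitGramianApply U ψ (f n) γ₀ - g γ₀‖
          = Real.sqrt (‖orbitGramianApply U ψ (f n) γ₀ - g γ₀‖ ^ 2) :=
            (Real.sqrt_sq (norm_nonneg _)).symm
        _ ≤ _ := Real.sqrt_le_sqrt hle
    apply squeeze_zero (fun n => norm_nonneg _) hb
    have : Tendsto (fun n => Real.sqrt (∑' γ : Γ, ‖orbitGramianApply U ψ (f n) γ - g γ‖ ^ 2))
        atTop (𝓝 (Real.sqrt 0)) := (Real.continuous_sqrt.tendsto 0).comp hconv
    simpa using this
  exact tendsto_nhds_unique h2 h1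
end
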